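/- arXiv:2203.06913 — 4 statements merged into one kernel-verified Lean document; each statement's English description precedes it below -/
import Mathlib

section
/- Let Q be a query graph with no isolated vertices, and let G and G' be data graphs on the same vertex set with the same vertex labeling, E(G) ⊆ E(G'), identical edge labels on common edges, and Δ = E(G') \ E(G) the inserted edges. Fix an enumeration e_1,…,e_n of E(Q) with e_k = {x_k,y_k}; let R_k = {(v,v') : {v,v'} ∈ E(G'), L(x_k)=L(v), L(y_k)=L(v'), L(e_k)=L({v,v'})} and ΔR_k = {(v,v') ∈ R_k : {v,v'} ∈ Δ}. For each k let ΔQ_k be the set of maps M : V(Q) → V(G') with (M(x_i),M(y_i)) ∈ R_i for all i < k, (M(x_k),M(y_k)) ∈ ΔR_k, and (M(x_i),M(y_i)) ∈ R_i \ ΔR_i for all i > k. Then ⋃_{k=1}^{n} ΔQ_k equals the set of homomorphisms of Q in G' that are not homomorphisms of Q in G (the positive matches), and the sets ΔQ_k are pairwise disjoint. -/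
/-- A homomorphism (match) of a labeled query graph `Q` in a labeled data graph `G`:
a map `M` preserving vertex labels, adjacency, and edge labels. -/
def IsLabeledHom {α β SV SE : Type*} (Q : SimpleGraph α) (G : SimpleGraph β)
    (LQv : α → SV) (LGv : β → SV) (LQe : Sym2 α → SE) (LGe : Sym2 β → SE)
    (M : α → β) : Prop :=
  (∀ u, LQv u = LGv (M u)) ∧
  ∀ u u', Q.Adj u u' → G.Adj (M u) (M u') ∧ LQe s(u, u') = LGe s(M u, M u')

/-- On an edge insertion `Δ = E(G') \ E(G)`, the union of the
incremental join terms `ΔQ_k` is exactly the set of positive matches (homomorphisms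
of `Q` in `G'` that are not homomorphisms of `Q` in `G`), and the `ΔQ_k` are
pairwise disjoint. -/
theorem insertion_incremental_matches
    {α β SV SE : Type*} [Fintype α] [Fintype β]
    (Q : SimpleGraph α) (G G' : SimpleGraph β)
    (LQv : α → SV) (LGv : β → SV)
    (LQe : Sym2 α → SE) (LGe LG'e : Sym2 β → SE)
    (hniso : ∀ u : α, ∃ u', Q.Adj u u')
    (hsub : G ≤ G')
    (hagree : ∀ v v' : β, G.Adj v v' → LGe s(v, v') = LG'e s(v, v'))
    (n : ℕ) (x y : Fin n → α)
    (hedges : ∀ k, Q.Adj (x k) (y k))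
    (hcover : ∀ a b, Q.Adj a b → ∃ k, (x k = a ∧ y k = b) ∨ (x k = b ∧ y k = a))
    (R DR : Fin n → Set (β × β)) (DQ : Fin n → Set (α → β))
    (hR : ∀ k, R k = {p : β × β | G'.Adj p.1 p.2 ∧ LQv (x k) = LGv p.1 ∧
        LQv (y k) = LGv p.2 ∧ LQe s(x k, y k) = LG'e s(p.1, p.2)})
    (hDR : ∀ k, DR k = {p ∈ R k | G'.Adj p.1 p.2 ∧ ¬ G.Adj p.1 p.2})
    (hDQ : ∀ k, DQ k = {M : α → β |
        (∀ i, i < k → (M (x i), M (y i)) ∈ R i) ∧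
        (M (x k), M (y k)) ∈ DR k ∧
        (∀ i, k < i → (M (x i), M (y i)) ∈ R i \ DR i)}) :
    (⋃ k, DQ k) = {M : α → β | IsLabeledHom Q G' LQv LGv LQe LG'e M ∧
        ¬ IsLabeledHom Q G LQv LGv LQe LGe M} ∧
    Pairwise (Function.onFun Disjoint DQ) := by
  classical
  constructor
  · ext M
    simp only [Set.mem_iUnion, Set.mem_setOf_eq]
    constructor
    · rintro ⟨k, hM⟩
      rw [hDQ k] at hM
      obtain ⟨h1, h2, h3⟩ := hM
      have hall : ∀ i, (M (x i), M (y i)) ∈ R i := by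
        intro i
        rcases lt_trichotomy i k with h | h | h
        · exact h1 i h
        · subst h; rw [hDR i] at h2; exact h2.1
        · exact (h3 i h).1
      have hallR : ∀ i, G'.Adj (M (x i)) (M (y i)) ∧ LQv (x i) = LGv (M (x i)) ∧
          LQv (y i) = LGv (M (y i)) ∧ LQe s(x i, y i) = LG'e s(M (x i), M (y i)) := by
        intro i; have := hall i; rw [hR i] at this; exact this
      have hhom : IsLabeledHom Q G' LQv LGv LQe LG'e M := by
        constructor
        · intro u
          obtain ⟨u', hu'⟩ := hniso u
          obtain ⟨i, hi | hi⟩ := hcover u u' hu'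
          · rw [← hi.1]; exact (hallR i).2.1
          · rw [← hi.2]; exact (hallR i).2.2.1
        · intro u u' huu'
          obtain ⟨i, hi | hi⟩ := hcover u u' huu'
          · obtain ⟨ha, _, _, he⟩ := hallR i
            rw [← hi.1, ← hi.2]; exact ⟨ha, he⟩
          · obtain ⟨ha, _, _, he⟩ := hallR i
            rw [← hi.1, ← hi.2]
            refine ⟨ha.symm, ?_⟩
            rw [Sym2.eq_swap, he, Sym2.eq_swap]
      refine ⟨hhom, fun hcon => ?_⟩
      rw [hDR k] at h2
      exact h2.2.2 (hcon.2 (x k) (y k) (hedges k)).1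
    · rintro ⟨hhom, hnot⟩
      have hall : ∀ i, (M (x i), M (y i)) ∈ R i := by
        intro i; rw [hR i]
        obtain ⟨ha, he⟩ := hhom.2 (x i) (y i) (hedges i)
        exact ⟨ha, hhom.1 (x i), hhom.1 (y i), he⟩
      have hex : ∃ i, ¬ G.Adj (M (x i)) (M (y i)) := by
        by_contra h
        push_neg at h
        apply hnot
        have hGadj : ∀ u u', Q.Adj u u' → G.Adj (M u) (M u') := by
          intro u u' huu'
          obtain ⟨i, hi | hi⟩ := hcover u u' huu'
          · rw [← hi.1, ← hi.2]; exact h i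
          · rw [← hi.1, ← hi.2]; exact (h i).symm
        exact ⟨hhom.1, fun u u' huu' => ⟨hGadj u u' huu',
          by rw [(hhom.2 u u' huu').2, ← hagree _ _ (hGadj u u' huu')]⟩⟩
      obtain ⟨i0, hi0⟩ := hex
      set S : Finset (Fin n) := Finset.univ.filter
        (fun i => ¬ G.Adj (M (x i)) (M (y i))) with hS
      have hSne : S.Nonempty := ⟨i0, by simp [hS, hi0]⟩
      refine ⟨S.max' hSne, ?_⟩
      rw [hDQ]
      have hkS : S.max' hSne ∈ S := S.max'_mem hSne
      have hkadj : ¬ G.Adj (M (x (S.max' hSne))) (M (y (S.max' hSne))) := by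
        simpa [hS] using hkS
      refine ⟨fun i _ => hall i, ?_, fun i hi => ⟨hall i, fun hmem => ?_⟩⟩
      · rw [hDR]
        refine ⟨hall _, ?_, hkadj⟩
        have := hall (S.max' hSne); rw [hR] at this; exact this.1
      · rw [hDR i] at hmem
        have hiS : i ∈ S := by simp [hS, hmem.2.2]
        exact absurd (S.le_max' i hiS) (not_le.mpr hi)
  · intro j k hjk
    rw [Function.onFun, Set.disjoint_left]
    intro M hj hk
    rw [hDQ j] at hj
    rw [hDQ k] at hk
    rcases hjk.lt_or_gt with h | h
    · exact ((hj.2.2 k h).2) hk.2.1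
    · exact ((hk.2.2 j h).2) hj.2.1
end

section
/- Let Q be a query graph with no isolated vertices, and let G and G' be data graphs on the same vertex set with the same vertex labeling, E(G') ⊆ E(G), identical edge labels on common edges, and Δ = E(G) \ E(G') the deleted edges. Fix an enumeration e_1,…,e_n of E(Q) with e_k = {x_k,y_k}; let R_k = {(v,v') : {v,v'} ∈ E(G), L(x_k)=L(v), L(y_k)=L(v'), L(e_k)=L({v,v'})} and ΔR_k = {(v,v') ∈ R_k : {v,v'} ∈ Δ}. For each k let ΔQ_k be the set of maps M : V(Q) → V(G) with (M(x_i),M(y_i)) ∈ R_i for all i < k, (M(x_k),M(y_k)) ∈ ΔR_k, and (M(x_i),M(y_i)) ∈ R_i \ ΔR_i for all i > k. Then ⋃_{k=1}^{n} ΔQ_k equals the set of homomorphisms of Q in G that are not homomorphisms of Q in G' (the negative matches), and the sets ΔQ_k are pairwise disjoint. -/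
/-- On an edge deletion `Δ = E(G) \ E(G')`, the union of the
incremental join terms `ΔQ_k` is exactly the set of negative matches (homomorphisms
of `Q` in `G` that are not homomorphisms of `Q` in `G'`), and the `ΔQ_k` are
pairwise disjoint. -/
theorem deletion_incremental_matches
    {α β SV SE : Type*} [Fintype α] [Fintype β]
    (Q : SimpleGraph α) (G G' : SimpleGraph β)
    (LQv : α → SV) (LGv : β → SV)
    (LQe : Sym2 α → SE) (LGe LG'e : Sym2 β → SE)
    (hniso : ∀ u : α, ∃ u', Q.Adj u u')
    (hsub : G' ≤ G)
    (hagree : ∀ v v' : β, G'.Adj v v' → LG'e s(v, v') = LGe s(v, v'))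
    (n : ℕ) (x y : Fin n → α)
    (hedges : ∀ k, Q.Adj (x k) (y k))
    (hcover : ∀ a b, Q.Adj a b → ∃ k, (x k = a ∧ y k = b) ∨ (x k = b ∧ y k = a))
    (R DR : Fin n → Set (β × β)) (DQ : Fin n → Set (α → β))
    (hR : ∀ k, R k = {p : β × β | G.Adj p.1 p.2 ∧ LQv (x k) = LGv p.1 ∧
        LQv (y k) = LGv p.2 ∧ LQe s(x k, y k) = LGe s(p.1, p.2)})
    (hDR : ∀ k, DR k = {p ∈ R k | G.Adj p.1 p.2 ∧ ¬ G'.Adj p.1 p.2})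
    (hDQ : ∀ k, DQ k = {M : α → β |
        (∀ i, i < k → (M (x i), M (y i)) ∈ R i) ∧
        (M (x k), M (y k)) ∈ DR k ∧
        (∀ i, k < i → (M (x i), M (y i)) ∈ R i \ DR i)}) :
    (⋃ k, DQ k) = {M : α → β | IsLabeledHom Q G LQv LGv LQe LGe M ∧
        ¬ IsLabeledHom Q G' LQv LGv LQe LG'e M} ∧
    Pairwise (Function.onFun Disjoint DQ) := by

  constructor
  · ext M
    simp only [Set.mem_iUnion, Set.mem_setOf_eq]
    constructor
    · rintro ⟨k, hM⟩
      rw [hDQ] at hM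
      obtain ⟨h1, h2, h3⟩ := hM
      have hRall : ∀ i, (M (x i), M (y i)) ∈ R i := by
        intro i
        rcases lt_trichotomy i k with h | h | h
        · exact h1 i h
        · subst h; rw [hDR] at h2; exact h2.1
        · exact (h3 i h).1
      have hRall' : ∀ i, G.Adj (M (x i)) (M (y i)) ∧ LQv (x i) = LGv (M (x i)) ∧
          LQv (y i) = LGv (M (y i)) ∧ LQe s(x i, y i) = LGe s(M (x i), M (y i)) := by
        intro i; have := hRall i; rw [hR] at this; exact this
      constructor
      · constructor
        · intro u
          obtain ⟨u', hu'⟩ := hniso u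
          obtain ⟨i, hi | hi⟩ := hcover u u' hu'
          · rw [← hi.1]; exact (hRall' i).2.1
          · rw [← hi.2]; exact (hRall' i).2.2.1
        · intro u u' huu'
          obtain ⟨i, hi | hi⟩ := hcover u u' huu'
          · obtain ⟨ha, _, _, he⟩ := hRall' i
            rw [← hi.1, ← hi.2]; exact ⟨ha, he⟩
          · obtain ⟨ha, _, _, he⟩ := hRall' i
            rw [← hi.1, ← hi.2]
            refine ⟨ha.symm, ?_⟩
            rw [show s(y i, x i) = s(x i, y i) from Sym2.eq_swap,
              show s(M (y i), M (x i)) = s(M (x i), M (y i)) from Sym2.eq_swap]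
            exact he
      · rintro ⟨_, hE⟩
        rw [hDR] at h2
        exact h2.2.2 (hE (x k) (y k) (hedges k)).1
    · rintro ⟨hG, hG'⟩
      have hRall : ∀ i, (M (x i), M (y i)) ∈ R i := by
        intro i; rw [hR]
        exact ⟨(hG.2 _ _ (hedges i)).1, hG.1 _, hG.1 _, (hG.2 _ _ (hedges i)).2⟩
      have hS : {i : Fin n | (M (x i), M (y i)) ∈ DR i}.Nonempty := by
        by_contra hno
        rw [Set.not_nonempty_iff_eq_empty, Set.eq_empty_iff_forall_notMem] at hno
        apply hG'
        refine ⟨hG.1, fun u u' huu' => ?_⟩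
        have hGadj := (hG.2 u u' huu').1
        have hadj : G'.Adj (M u) (M u') := by
          by_contra hna
          obtain ⟨i, hi | hi⟩ := hcover u u' huu'
          · apply hno i
            show (M (x i), M (y i)) ∈ DR i
            rw [hDR]
            refine ⟨hRall i, ?_, ?_⟩
            · rw [hi.1, hi.2]; exact hGadj
            · rw [hi.1, hi.2]; exact hna
          · apply hno i
            show (M (x i), M (y i)) ∈ DR i
            rw [hDR]
            refine ⟨hRall i, ?_, ?_⟩
            · rw [hi.1, hi.2]; exact hGadj.symm
            · rw [hi.1, hi.2]; exact fun h => hna h.symm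
        refine ⟨hadj, ?_⟩
        rw [hagree _ _ hadj]
        exact (hG.2 u u' huu').2
      obtain ⟨k, hk, hkmax⟩ := wellFounded_gt.has_min _ hS
      refine ⟨k, ?_⟩
      rw [hDQ]
      refine ⟨fun i _ => hRall i, hk, fun i hik => ⟨hRall i, fun hmem => hkmax i hmem hik⟩⟩
  · intro j k hjk
    rw [Function.onFun, Set.disjoint_left]
    intro M hMj hMk
    rw [hDQ] at hMj hMk
    rcases hjk.lt_or_gt with h | h
    · exact (hMj.2.2 k h).2 hMk.2.1
    · exact (hMk.2.2 j h).2 hMj.2.1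
end

section
/- Let Q and G be labeled graphs and let C assign to every u ∈ V(Q) a set C(u) ⊆ V(G) that is arc-consistent: for every u ∈ V(Q) and v ∈ C(u), L(v) = L(u), and for every neighbor u' of u in Q there exists v' ∈ C(u') with {v,v'} ∈ E(G) and L({u,u'}) = L({v,v'}). Then for every u ∈ V(Q), every v ∈ C(u), and every path P that is a subgraph of Q with u as an endpoint, there exists a homomorphism M of P in G with M(u) = v and M(w) ∈ C(w) for every vertex w of P. (Hence candidates satisfying the SM filtering condition satisfy SymBi's condition, which in turn implies TurboFlux's and IEDyn's conditions.) -/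
section aux

variable {α β SV SE : Type*}
    (Q : SimpleGraph α) (G : SimpleGraph β)
    (Lv : α → SV) (LGv : β → SV) (Le : Sym2 α → SE) (LGe : Sym2 β → SE)
    (C : α → Set β)

/-- Auxiliary induction with the start vertex and its candidate generalized. -/
theorem arc_consistent_aux
    (hlabel : ∀ u : α, ∀ v ∈ C u, LGv v = Lv u)
    (harc : ∀ u : α, ∀ v ∈ C u, ∀ u' : α, Q.Adj u u' →
      ∃ v' ∈ C u', G.Adj v v' ∧ Le s(u, u') = LGe s(v, v')) :
    ∀ (u w : α) (p : Q.Walk u w), p.IsPath → ∀ v ∈ C u,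
      ∃ M : α → β, M u = v ∧ (∀ a ∈ p.support, Lv a = LGv (M a) ∧ M a ∈ C a) ∧
        ∀ a b : α, s(a, b) ∈ p.edges →
          G.Adj (M a) (M b) ∧ Le s(a, b) = LGe s(M a, M b) := by
  intro u w p
  induction p with
  | nil =>
    intro _ v hv
    refine ⟨fun _ => v, rfl, ?_, ?_⟩
    · intro a ha
      simp only [SimpleGraph.Walk.support_nil, List.mem_singleton] at ha
      subst ha
      exact ⟨(hlabel _ _ hv).symm, hv⟩
    · intro a b hab
      simp at hab
  | @cons u u' w h q ih =>
    intro hp v hv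
    have hq : q.IsPath := hp.of_cons
    have hu : u ∉ q.support := by
      have := hp.support_nodup
      simp only [SimpleGraph.Walk.support_cons, List.nodup_cons] at this
      exact this.1
    obtain ⟨v', hv', hadj, hle⟩ := harc u v hv u' h
    obtain ⟨M', hM'u', hM'sup, hM'edge⟩ := ih hq v' hv'
    classical
    refine ⟨fun a => if a = u then v else M' a, if_pos rfl, ?_, ?_⟩
    · intro a ha
      simp only [SimpleGraph.Walk.support_cons, List.mem_cons] at ha
      rcases ha with rfl | ha
      · simp only [if_pos rfl]
        exact ⟨(hlabel _ _ hv).symm, hv⟩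
      · have hne : a ≠ u := fun hh => hu (hh ▸ ha)
        simp only [if_neg hne]
        exact hM'sup a ha
    · intro a b hab
      simp only [SimpleGraph.Walk.edges_cons, List.mem_cons] at hab
      have hu'ne : u' ≠ u := (h.ne).symm
      rcases hab with hab | hab
      · rw [Sym2.eq_iff] at hab
        rcases hab with ⟨rfl, rfl⟩ | ⟨rfl, rfl⟩
        · simp only [if_pos rfl, if_neg hu'ne, hM'u']
          exact ⟨hadj, hle⟩
        · simp only [if_pos rfl, if_neg hu'ne, hM'u', if_true]
          refine ⟨hadj.symm, ?_⟩
          rw [Sym2.eq_swap (a := v') (b := v), ← hle, Sym2.eq_swap]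
      · have ha : a ∈ q.support := SimpleGraph.Walk.fst_mem_support_of_mem_edges q hab
        have hb : b ∈ q.support := SimpleGraph.Walk.snd_mem_support_of_mem_edges q hab
        have hane : a ≠ u := fun hh => hu (hh ▸ ha)
        have hbne : b ≠ u := fun hh => hu (hh ▸ hb)
        simp only [if_neg hane, if_neg hbne]
        exact hM'edge a b hab

end aux

/-- given arc-consistent candidate sets `C`, every `v ∈ C u` and every
path `p` in `Q` with endpoint `u` admit a homomorphism `M` of `p` in `G` with
`M u = v` and `M w ∈ C w` for every vertex `w` of `p`. -/
theorem arc_consistent_implies_path_matches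
    {α β SV SE : Type*} [Fintype α] [Fintype β]
    (Q : SimpleGraph α) (G : SimpleGraph β)
    (Lv : α → SV) (LGv : β → SV) (Le : Sym2 α → SE) (LGe : Sym2 β → SE)
    (C : α → Set β)
    (hlabel : ∀ u : α, ∀ v ∈ C u, LGv v = Lv u)
    (harc : ∀ u : α, ∀ v ∈ C u, ∀ u' : α, Q.Adj u u' →
      ∃ v' ∈ C u', G.Adj v v' ∧ Le s(u, u') = LGe s(v, v'))
    (u : α) (v : β) (hv : v ∈ C u) :
    ∀ (w : α) (p : Q.Walk u w), p.IsPath →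
      ∃ M : α → β, M u = v ∧ (∀ a ∈ p.support, Lv a = LGv (M a) ∧ M a ∈ C a) ∧
        ∀ a b : α, s(a, b) ∈ p.edges →
          G.Adj (M a) (M b) ∧ Le s(a, b) = LGe s(M a, M b) := by
  intro w p hp
  exact arc_consistent_aux Q G Lv LGv Le LGe C hlabel harc u w p hp v hv
end

section
/- Let Q be a query graph that is a tree and G a data graph, and let C assign to every u ∈ V(Q) a set C(u) ⊆ V(G) that is arc-consistent: for every u ∈ V(Q) and v ∈ C(u), L(v) = L(u), and for every neighbor u' of u in Q there exists v' ∈ C(u') with {v,v'} ∈ E(G) and L({u,u'}) = L({v,v'}). Then for every u ∈ V(Q) and every v ∈ C(u), there exists a homomorphism M of Q in G with M(u) = v and M(w) ∈ C(w) for every w ∈ V(Q). (This is the paper's proposition that, for tree queries, candidate sets produced by the modified bottom-up/top-down pruning procedure contain only vertices appearing in matches; it holds under homomorphism semantics.) -/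
/-- Propagate a candidate along a walk towards the root. -/
noncomputable def chainF {α β : Type*} {Q : SimpleGraph α} (C : α → Set β)
    (R : α → α → β → β → Prop)
    (step : ∀ a b : α, Q.Adj a b → ∀ x : β, x ∈ C a → {y : β // y ∈ C b ∧ R a b x y})
    {u : α} (v : β) (hv : v ∈ C u) :
    ∀ {w : α}, Q.Walk w u → {y : β // y ∈ C w}
  | _, SimpleGraph.Walk.nil => ⟨v, hv⟩
  | _, SimpleGraph.Walk.cons h p =>
      let r := chainF C R step v hv p
      ⟨(step _ _ h.symm r.1 r.2).1, (step _ _ h.symm r.1 r.2).2.1⟩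

lemma chainF_cons_spec {α β : Type*} {Q : SimpleGraph α} (C : α → Set β)
    (R : α → α → β → β → Prop)
    (step : ∀ a b : α, Q.Adj a b → ∀ x : β, x ∈ C a → {y : β // y ∈ C b ∧ R a b x y})
    {u : α} (v : β) (hv : v ∈ C u) {w x : α} (h : Q.Adj w x) (p : Q.Walk x u) :
    R x w (chainF C R step v hv p).1
      (chainF C R step v hv (SimpleGraph.Walk.cons h p)).1 := by
  simp only [chainF]
  exact (step _ _ h.symm _ _).2.2

/-- for a tree query `Q` with arc-consistent candidate sets `C`, every
`v ∈ C u` appears in a (homomorphism-semantics) match of `Q` in `G` that maps `u`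
to `v` and stays inside the candidate sets. -/
theorem tree_arc_consistent_candidates_in_matches
    {α β SV SE : Type*} [Fintype α] [Fintype β]
    (Q : SimpleGraph α) (G : SimpleGraph β)
    (Lv : α → SV) (LGv : β → SV) (Le : Sym2 α → SE) (LGe : Sym2 β → SE)
    (htree : Q.IsTree)
    (C : α → Set β)
    (hlabel : ∀ u : α, ∀ v ∈ C u, LGv v = Lv u)
    (harc : ∀ u : α, ∀ v ∈ C u, ∀ u' : α, Q.Adj u u' →
      ∃ v' ∈ C u', G.Adj v v' ∧ Le s(u, u') = LGe s(v, v'))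
    (u : α) (v : β) (hv : v ∈ C u) :
    ∃ M : α → β, IsLabeledHom Q G Lv LGv Le LGe M ∧ M u = v ∧ ∀ w : α, M w ∈ C w := by
  classical
  set R : α → α → β → β → Prop :=
    fun a b x y => G.Adj x y ∧ Le s(a, b) = LGe s(x, y) with hR
  have step : ∀ a b : α, Q.Adj a b → ∀ x : β, x ∈ C a →
      {y : β // y ∈ C b ∧ R a b x y} := by
    intro a b hab x hx
    have hspec := (harc a x hx b hab).choose_spec
    exact ⟨(harc a x hx b hab).choose, hspec.1, hspec.2.1, hspec.2.2⟩
  -- unique path from each vertex to the root u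
  have P : ∀ w : α, Q.Path w u := fun w =>
    (Nonempty.some (htree.isConnected.preconnected w u)).toPath
  have hP : ∀ (w : α) (q : Q.Walk w u), q.IsPath → q = (P w).1 := by
    intro w q hq
    have := htree.IsAcyclic.path_unique ⟨q, hq⟩ (P w)
    exact congrArg Subtype.val this
  set M : α → β := fun w => (chainF C R step v hv (P w).1).1 with hM
  have hMC : ∀ w, M w ∈ C w := fun w => (chainF C R step v hv (P w).1).2
  have hMu : M u = v := by
    have : (P u) = SimpleGraph.Path.nil := SimpleGraph.Path.loop_eq (P u)
    simp only [hM, this]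
    simp [chainF, SimpleGraph.Path.nil]
  -- dichotomy for edges
  have hedge : ∀ a b : α, ∀ hab : Q.Adj a b,
      ((P b).1 = SimpleGraph.Walk.cons hab.symm (P a).1) ∨
      ((P a).1 = SimpleGraph.Walk.cons hab (P b).1) := by
    intro a b hab
    by_cases hb : b ∈ (P a).1.support
    · right
      have hspec := (P a).1.take_spec hb
      have ht : ((P a).1.takeUntil b hb) = SimpleGraph.Walk.cons hab SimpleGraph.Walk.nil := by
        have h1 : ((P a).1.takeUntil b hb).IsPath := (P a).2.takeUntil hb
        have h2 := htree.IsAcyclic.path_unique ⟨(P a).1.takeUntil b hb, h1⟩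
          (SimpleGraph.Path.singleton hab)
        exact congrArg Subtype.val h2
      have hd : ((P a).1.dropUntil b hb) = (P b).1 :=
        hP b _ ((P a).2.dropUntil hb)
      rw [← hspec, ht, hd]
      simp [SimpleGraph.Walk.cons_append]
    · left
      have : (SimpleGraph.Walk.cons hab.symm (P a).1).IsPath := by
        rw [SimpleGraph.Walk.cons_isPath_iff]
        exact ⟨(P a).2, hb⟩
      exact (hP b _ this).symm
  refine ⟨M, ⟨?_, ?_⟩, hMu, hMC⟩
  · intro w
    exact (hlabel w (M w) (hMC w)).symm
  · intro a b hab
    rcases hedge a b hab with h | h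
    · have := chainF_cons_spec C R step v hv hab.symm (P a).1
      rw [← h] at this
      exact ⟨this.1, this.2⟩
    · have := chainF_cons_spec C R step v hv hab (P b).1
      rw [← h] at this
      refine ⟨this.1.symm, ?_⟩
      calc Le s(a, b) = Le s(b, a) := by rw [Sym2.eq_swap]
        _ = LGe s(M b, M a) := this.2
        _ = LGe s(M a, M b) := by rw [Sym2.eq_swap]
end
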